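/- arXiv:2311.10040 — 10 statements merged into one kernel-verified Lean document; each statement's English description precedes it below -/
import Mathlib

section
/- A matrix M whose entries are sets (over finite index sets) is a 'proper block matrix' — i.e., there exist pairwise disjoint row-index sets A_1,...,A_k and pairwise disjoint column-index sets B_1,...,B_k such that M[i,j] is nonempty iff there is ℓ with i ∈ A_ℓ and j ∈ B_ℓ — if and only if M has no 2×2 submatrix with exactly one empty entry. -/
/-- A set-valued matrix is a proper block matrix: there are pairwise disjoint row
sets `A ℓ` and pairwise disjoint column sets `B ℓ` such that the entry `M a b` is
nonempty iff `a ∈ A ℓ` and `b ∈ B ℓ` for some `ℓ`. -/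
def ProperBlockMatrix {ι κ S : Type*} (M : ι → κ → Set S) : Prop :=
  ∃ (k : ℕ) (A : Fin k → Set ι) (B : Fin k → Set κ),
    (∀ i j, i ≠ j → Disjoint (A i) (A j)) ∧
    (∀ i j, i ≠ j → Disjoint (B i) (B j)) ∧
    (∀ a b, (M a b).Nonempty ↔ ∃ ℓ, a ∈ A ℓ ∧ b ∈ B ℓ)

theorem stmt_0 {ι κ S : Type*} [Fintype ι] [Fintype κ] (M : ι → κ → Set S) :
    ProperBlockMatrix M ↔
      ¬ ∃ (a a' : ι) (b b' : κ), a ≠ a' ∧ b ≠ b' ∧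
        (M a b).Nonempty ∧ (M a b').Nonempty ∧ (M a' b).Nonempty ∧ ¬ (M a' b').Nonempty := by
  classical
  constructor
  · rintro ⟨k, A, B, hA, hB, hM⟩ ⟨a, a', b, b', hab, hbb, h1, h2, h3, h4⟩
    obtain ⟨ℓ1, ha1, hb1⟩ := (hM a b).1 h1
    obtain ⟨ℓ2, ha2, hb2⟩ := (hM a b').1 h2
    obtain ⟨ℓ3, ha3, hb3⟩ := (hM a' b).1 h3
    have e12 : ℓ1 = ℓ2 := by
      by_contra hne
      exact Set.disjoint_left.1 (hA ℓ1 ℓ2 hne) ha1 ha2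
    have e13 : ℓ1 = ℓ3 := by
      by_contra hne
      exact Set.disjoint_left.1 (hB ℓ1 ℓ3 hne) hb1 hb3
    exact h4 ((hM a' b').2 ⟨ℓ1, e13 ▸ ha3, e12 ▸ hb2⟩)
  · intro h
    set supp : ι → Set κ := fun a => {b | (M a b).Nonempty} with hsupp
    have key1 : ∀ a a' b b'', a ≠ a' → b ∈ supp a → b ∈ supp a' → b'' ∈ supp a →
        b'' ∈ supp a' := by
      intro a a' b b'' haa hb hb' hb''
      by_cases hbe : b'' = b
      · exact hbe ▸ hb'
      by_contra hne
      exact h ⟨a, a', b, b'', haa, fun e => hbe e.symm, hb, hb'', hb', hne⟩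
    have key : ∀ a a' b, b ∈ supp a → b ∈ supp a' → supp a = supp a' := by
      intro a a' b hb hb'
      by_cases haa : a = a'
      · rw [haa]
      ext b''
      exact ⟨fun hx => key1 a a' b b'' haa hb hb' hx,
             fun hx => key1 a' a b b'' (Ne.symm haa) hb' hb hx⟩
    let T : Set (Set κ) := {C | ∃ a, supp a = C}
    haveI : Fintype T := Fintype.ofFinite T
    let e := Fintype.equivFin T
    refine ⟨Fintype.card T,
      fun ℓ => {a | supp a = (e.symm ℓ : Set κ)},
      fun ℓ => (e.symm ℓ : Set κ), ?_, ?_, ?_⟩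
    · intro i j hij
      rw [Set.disjoint_left]
      intro a hai haj
      apply hij
      have : (e.symm i : Set κ) = (e.symm j : Set κ) := by
        rw [← hai, ← haj]
      exact e.symm.injective (Subtype.ext this)
    · intro i j hij
      rw [Set.disjoint_left]
      intro b hbi hbj
      apply hij
      obtain ⟨a, ha⟩ := (e.symm i).2
      obtain ⟨a', ha'⟩ := (e.symm j).2
      have : (e.symm i : Set κ) = (e.symm j : Set κ) := by
        rw [← ha, ← ha']
        exact key a a' b (ha ▸ hbi) (ha' ▸ hbj)
      exact e.symm.injective (Subtype.ext this)
    · intro a b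
      constructor
      · intro hne
        refine ⟨e ⟨supp a, a, rfl⟩, ?_, ?_⟩
        · show supp a = _
          rw [e.symm_apply_apply]
        · show b ∈ (e.symm (e ⟨supp a, a, rfl⟩) : Set κ)
          rw [e.symm_apply_apply]
          exact hne
      · rintro ⟨ℓ, ha, hb⟩
        have : b ∈ supp a := by rw [show supp a = (e.symm ℓ : Set κ) from ha]; exact hb
        exact this
end

section
/- If a constraint R(u⃗) over a finite domain D is blockwise decomposable, then for every subset Y of its scope the projection π_Y R(u⃗) is blockwise decomposable; and for every variable z in the scope and every S ⊆ D, the selection R(u⃗)|_{z∈S} is blockwise decomposable. -/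
/-- Projection of a constraint (a set of assignments `V → D`) onto a set `Y` of
variables: the set of restrictions of solutions to `Y`. -/
def proj {V D : Type*} (Y : Set V) (R : Set (V → D)) : Set (Y → D) :=
  {g | ∃ f ∈ R, ∀ y : Y, f y = g y}

/-- A constraint is decomposable with respect to the partition `(P, Pᶜ)` of its scope
if it is the product of its projections onto `P` and `Pᶜ`. -/
def Decomp {V D : Type*} (R : Set (V → D)) (P : Set V) : Prop :=
  ∀ f : V → D,
    f ∈ R ↔ ((fun v : P => f v) ∈ proj P R ∧ (fun v : ↥(Pᶜ) => f v) ∈ proj Pᶜ R)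

/-- `R` is blockwise decomposable in the pair of variables `x, y`: the selection
matrix `M^R_{x,y}` is a proper block matrix (blocks `(A ℓ, B ℓ)`), and each block
restriction of `R` decomposes as a product over a partition separating `x` from `y`. -/
def BlockwiseIn {V D : Type*} (R : Set (V → D)) (x y : V) : Prop :=
  ∃ (k : ℕ) (A B : Fin k → Set D),
    (∀ i j, i ≠ j → Disjoint (A i) (A j)) ∧
    (∀ i j, i ≠ j → Disjoint (B i) (B j)) ∧
    (∀ a b : D, (∃ f ∈ R, f x = a ∧ f y = b) ↔ ∃ ℓ, a ∈ A ℓ ∧ b ∈ B ℓ) ∧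
    (∀ ℓ, ∃ P : Set V, x ∈ P ∧ y ∉ P ∧ Decomp {f ∈ R | f x ∈ A ℓ ∧ f y ∈ B ℓ} P)

/-- `R` is blockwise decomposable: blockwise decomposable in every pair of
distinct scope variables. -/
def Blockwise {V D : Type*} (R : Set (V → D)) : Prop :=
  ∀ x y : V, x ≠ y → BlockwiseIn R x y

lemma combine_s1 {V D : Type*} {R₀ : Set (V → D)} {P : Set V} (hD : Decomp R₀ P)
    {f₁ f₂ : V → D} (h₁ : f₁ ∈ R₀) (h₂ : f₂ ∈ R₀) :
    ∃ f ∈ R₀, (∀ v ∈ P, f v = f₁ v) ∧ (∀ v ∉ P, f v = f₂ v) := by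
  classical
  refine ⟨fun v => if v ∈ P then f₁ v else f₂ v, ?_, fun v hv => if_pos hv,
    fun v hv => if_neg hv⟩
  exact (hD _).mpr ⟨⟨f₁, h₁, fun v => (if_pos v.2).symm⟩,
    ⟨f₂, h₂, fun v => (if_neg v.2).symm⟩⟩

lemma sel_decomp {V D : Type*} {R₀ : Set (V → D)} {P : Set V} (hD : Decomp R₀ P)
    (z : V) (S : Set D) : Decomp {f ∈ R₀ | f z ∈ S} P := by
  intro f
  constructor
  · rintro ⟨hf, hz⟩
    exact ⟨⟨f, ⟨hf, hz⟩, fun _ => rfl⟩, ⟨f, ⟨hf, hz⟩, fun _ => rfl⟩⟩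
  · rintro ⟨⟨f₁, ⟨hf₁, hz₁⟩, he₁⟩, ⟨f₂, ⟨hf₂, hz₂⟩, he₂⟩⟩
    have hfR : f ∈ R₀ := (hD f).mpr ⟨⟨f₁, hf₁, he₁⟩, ⟨f₂, hf₂, he₂⟩⟩
    by_cases hz : z ∈ P
    · refine ⟨hfR, ?_⟩
      have := he₁ ⟨z, hz⟩
      simp only at this
      rw [show f z = f₁ z from this.symm]
      exact hz₁
    · refine ⟨hfR, ?_⟩
      have := he₂ ⟨z, hz⟩
      simp only at this
      rw [show f z = f₂ z from this.symm]
      exact hz₂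

lemma proj_decomp {V D : Type*} {R₀ : Set (V → D)} {P : Set V} (hD : Decomp R₀ P)
    (Y : Set V) : Decomp (proj Y R₀) {v : ↥Y | (v : V) ∈ P} := by
  intro g
  constructor
  · intro hg
    exact ⟨⟨g, hg, fun _ => rfl⟩, ⟨g, hg, fun _ => rfl⟩⟩
  · rintro ⟨⟨g₁, ⟨f₁, hf₁, he₁⟩, hg₁⟩, ⟨g₂, ⟨f₂, hf₂, he₂⟩, hg₂⟩⟩
    obtain ⟨f, hf, hfP, hfPc⟩ := combine_s1 hD hf₁ hf₂
    refine ⟨f, hf, fun v => ?_⟩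
    by_cases hv : (v : V) ∈ P
    · calc f v = f₁ v := hfP v hv
        _ = g₁ v := he₁ v
        _ = g v := hg₁ ⟨v, hv⟩
    · calc f v = f₂ v := hfPc v hv
        _ = g₂ v := he₂ v
        _ = g v := hg₂ ⟨v, hv⟩

theorem stmt_1 {V D : Type*} [Fintype V] [Fintype D] (R : Set (V → D))
    (h : Blockwise R) :
    (∀ Y : Set V, Blockwise (proj Y R)) ∧
    (∀ (z : V) (S : Set D), Blockwise {f ∈ R | f z ∈ S}) := by
  constructor
  · intro Y x y hxy
    obtain ⟨k, A, B, hA, hB, hM, hP⟩ := h ↑x ↑y (Subtype.coe_injective.ne hxy)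
    choose P hxP hyP hDec using hP
    refine ⟨k, A, B, hA, hB, ?_, ?_⟩
    · intro a b
      rw [← hM a b]
      constructor
      · rintro ⟨g, ⟨f, hf, he⟩, hga, hgb⟩
        exact ⟨f, hf, (he x).trans hga, (he y).trans hgb⟩
      · rintro ⟨f, hf, hfa, hfb⟩
        exact ⟨fun v => f v, ⟨f, hf, fun _ => rfl⟩, hfa, hfb⟩
    · intro ℓ
      refine ⟨{v : ↥Y | (v : V) ∈ P ℓ}, hxP ℓ, hyP ℓ, ?_⟩
      have hset : {g ∈ proj Y R | g x ∈ A ℓ ∧ g y ∈ B ℓ}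
          = proj Y {f ∈ R | f ↑x ∈ A ℓ ∧ f ↑y ∈ B ℓ} := by
        ext g
        constructor
        · rintro ⟨⟨f, hf, he⟩, hga, hgb⟩
          exact ⟨f, ⟨hf, by rw [he x]; exact hga, by rw [he y]; exact hgb⟩, he⟩
        · rintro ⟨f, ⟨hf, hfa, hfb⟩, he⟩
          exact ⟨⟨f, hf, he⟩, by rw [← he x]; exact hfa, by rw [← he y]; exact hfb⟩
      rw [hset]
      exact proj_decomp (hDec ℓ) Y
  · intro z S x y hxy
    obtain ⟨k, A, B, hA, hB, hM, hP⟩ := h x y hxy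
    choose P hxP hyP hDec using hP
    set A' : Fin k → Set D :=
      fun ℓ => {a | ∃ f, (f ∈ R ∧ f x ∈ A ℓ ∧ f y ∈ B ℓ) ∧ f z ∈ S ∧ f x = a} with hA'
    set B' : Fin k → Set D :=
      fun ℓ => {b | ∃ f, (f ∈ R ∧ f x ∈ A ℓ ∧ f y ∈ B ℓ) ∧ f z ∈ S ∧ f y = b} with hB'
    have subA : ∀ ℓ, A' ℓ ⊆ A ℓ := by
      rintro ℓ a ⟨f, ⟨hf, hfa, hfb⟩, hz, rfl⟩; exact hfa
    have subB : ∀ ℓ, B' ℓ ⊆ B ℓ := by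
      rintro ℓ b ⟨f, ⟨hf, hfa, hfb⟩, hz, rfl⟩; exact hfb
    have rect : ∀ ℓ a b, a ∈ A' ℓ → b ∈ B' ℓ →
        ∃ f, (f ∈ R ∧ f x ∈ A ℓ ∧ f y ∈ B ℓ) ∧ f z ∈ S ∧ f x = a ∧ f y = b := by
      rintro ℓ a b ⟨g, hg, hgz, rfl⟩ ⟨w, hw, hwz, rfl⟩
      obtain ⟨f, hf, hfP, hfPc⟩ := combine_s1 (hDec ℓ) hg hw
      refine ⟨f, hf, ?_, hfP x (hxP ℓ), hfPc y (hyP ℓ)⟩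
      by_cases hzP : z ∈ P ℓ
      · rw [hfP z hzP]; exact hgz
      · rw [hfPc z hzP]; exact hwz
    refine ⟨k, A', B', ?_, ?_, ?_, ?_⟩
    · exact fun i j hij => (hA i j hij).mono (subA i) (subA j)
    · exact fun i j hij => (hB i j hij).mono (subB i) (subB j)
    · intro a b
      constructor
      · rintro ⟨f, ⟨hf, hfz⟩, rfl, rfl⟩
        obtain ⟨ℓ, hfa, hfb⟩ := (hM (f x) (f y)).mp ⟨f, hf, rfl, rfl⟩
        exact ⟨ℓ, ⟨f, ⟨hf, hfa, hfb⟩, hfz, rfl⟩, ⟨f, ⟨hf, hfa, hfb⟩, hfz, rfl⟩⟩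
      · rintro ⟨ℓ, ha, hb⟩
        obtain ⟨f, ⟨hf, _, _⟩, hfz, hfa, hfb⟩ := rect ℓ a b ha hb
        exact ⟨f, ⟨hf, hfz⟩, hfa, hfb⟩
    · intro ℓ
      refine ⟨P ℓ, hxP ℓ, hyP ℓ, ?_⟩
      have hset : {f ∈ {f ∈ R | f z ∈ S} | f x ∈ A' ℓ ∧ f y ∈ B' ℓ}
          = {f ∈ {f ∈ R | f x ∈ A ℓ ∧ f y ∈ B ℓ} | f z ∈ S} := by
        ext f
        constructor
        · rintro ⟨⟨hf, hfz⟩, ha, hb⟩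
          exact ⟨⟨hf, subA ℓ ha, subB ℓ hb⟩, hfz⟩
        · rintro ⟨⟨hf, hfa, hfb⟩, hfz⟩
          exact ⟨⟨hf, hfz⟩, ⟨f, ⟨hf, hfa, hfb⟩, hfz, rfl⟩, ⟨f, ⟨hf, hfa, hfb⟩, hfz, rfl⟩⟩
      rw [hset]
      exact sel_decomp (hDec ℓ) z S
end

section
/- If a constraint R(x⃗) over a finite domain is blockwise decomposable, then R(x⃗) equals the conjunction of all of its projections onto variable sets of size at most two; that is, an assignment α on the scope of R satisfies R iff for every subset Y of the scope with |Y| ≤ 2, the restriction α|_Y belongs to π_Y(R(x⃗)). -/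
theorem stmt_2 {V D : Type*} [Fintype V] [Fintype D] (R : Set (V → D))
    (h : Blockwise R) :
    ∀ α : V → D, α ∈ R ↔ ∀ Y : Set V, Y.ncard ≤ 2 → (fun y : Y => α y) ∈ proj Y R := by
  classical
  intro α
  constructor
  · intro hα Y _
    exact ⟨α, hα, fun y => rfl⟩
  · intro hcons
    have key : ∀ n : ℕ, ∀ S : Set V, S.ncard ≤ n → ∃ f ∈ R, ∀ v ∈ S, f v = α v := by
      intro n
      induction n with
      | zero =>
        intro S hS
        obtain ⟨f, hf, hfa⟩ := hcons S (le_trans hS (by norm_num))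
        exact ⟨f, hf, fun v hv => hfa ⟨v, hv⟩⟩
      | succ n ih =>
        intro S hS
        by_cases h2 : S.ncard ≤ 2
        · obtain ⟨f, hf, hfa⟩ := hcons S h2
          exact ⟨f, hf, fun v hv => hfa ⟨v, hv⟩⟩
        · push_neg at h2
          have h1 : 1 < S.ncard := by omega
          obtain ⟨x, y, hxS, hyS, hxy⟩ :=
            (Set.one_lt_ncard_iff (Set.toFinite S)).mp h1
          -- solutions agreeing with α on S \ {x} and S \ {y}
          have hdx : (S \ {x}).ncard ≤ n := by
            have := Set.ncard_diff_singleton_lt_of_mem hxS (Set.toFinite S)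
            omega
          have hdy : (S \ {y}).ncard ≤ n := by
            have := Set.ncard_diff_singleton_lt_of_mem hyS (Set.toFinite S)
            omega
          obtain ⟨f, hf, hfa⟩ := ih (S \ {x}) hdx
          obtain ⟨g, hg, hga⟩ := ih (S \ {y}) hdy
          obtain ⟨k, A, B, hA, hB, hpair, hdec⟩ := h x y hxy
          -- binary consistency at the pair {x, y}
          have hYcard : ({x, y} : Set V).ncard ≤ 2 := by
            have := Set.ncard_insert_le x ({y} : Set V)
            simpa [Set.ncard_singleton] using this
          obtain ⟨w, hw, hwa⟩ := hcons ({x, y} : Set V) hYcard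
          have hwx : w x = α x := hwa ⟨x, by simp⟩
          have hwy : w y = α y := hwa ⟨y, by simp⟩
          obtain ⟨ℓ, hαxA, hαyB⟩ :=
            (hpair (α x) (α y)).mp ⟨w, hw, hwx, hwy⟩
          -- f lies in block ℓ
          have hfy : f y = α y := hfa y ⟨hyS, fun hh => hxy (hh.symm)⟩
          obtain ⟨ℓf, hfA, hfB⟩ := (hpair (f x) (f y)).mp ⟨f, hf, rfl, rfl⟩
          have hℓf : ℓf = ℓ := by
            by_contra hne
            exact Set.disjoint_left.mp (hB ℓf ℓ hne) hfB (hfy ▸ hαyB)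
          rw [hℓf] at hfA hfB
          -- g lies in block ℓ
          have hgx : g x = α x := hga x ⟨hxS, fun hh => hxy hh⟩
          obtain ⟨ℓg, hgA, hgB⟩ := (hpair (g x) (g y)).mp ⟨g, hg, rfl, rfl⟩
          have hℓg : ℓg = ℓ := by
            by_contra hne
            exact Set.disjoint_left.mp (hA ℓg ℓ hne) hgA (hgx ▸ hαxA)
          rw [hℓg] at hgA hgB
          obtain ⟨P, hxP, hyP, hD⟩ := hdec ℓ
          set h0 : V → D := fun v => if v ∈ P then g v else f v with hh0
          have hgR : g ∈ {f ∈ R | f x ∈ A ℓ ∧ f y ∈ B ℓ} := ⟨hg, hgA, hgB⟩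
          have hfR : f ∈ {f ∈ R | f x ∈ A ℓ ∧ f y ∈ B ℓ} := ⟨hf, hfA, hfB⟩
          have hmem : h0 ∈ {f ∈ R | f x ∈ A ℓ ∧ f y ∈ B ℓ} := by
            refine (hD h0).mpr ⟨⟨g, hgR, fun v => ?_⟩, ⟨f, hfR, fun v => ?_⟩⟩
            · simp only [hh0, if_pos v.2]
            · have : (v : V) ∉ P := v.2
              simp only [hh0, if_neg this]
          refine ⟨h0, hmem.1, fun v hv => ?_⟩
          by_cases hvP : v ∈ P
          · have hvy : v ≠ y := fun hh => hyP (hh ▸ hvP)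
            simp only [hh0, if_pos hvP]
            exact hga v ⟨hv, hvy⟩
          · have hvx : v ≠ x := fun hh => hvP (hh ▸ hxP)
            simp only [hh0, if_neg hvP]
            exact hfa v ⟨hv, hvx⟩
    obtain ⟨f, hf, hfa⟩ := key (Fintype.card V) Set.univ (by
      simp [Set.ncard_univ, Nat.card_eq_fintype_card])
    have : α = f := funext fun v => (hfa v (Set.mem_univ v)).symm
    exact this ▸ hf
end

section
/- Every blockwise decomposable relation R is balanced: for every pair of distinct variables x,y in the scope of R, the |D|×|D| integer matrix whose (a,b) entry is the number of solutions of R with x=a and y=b is a proper block matrix in which every block, viewed as a real matrix, has rank at most 1. -/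
/-- The counting matrix: number of solutions of `R` with `x = a` and `y = b`. -/
noncomputable def countMatrix {V D : Type*} (R : Set (V → D)) (x y : V) (a b : D) : ℕ :=
  Nat.card {f : V → D // f ∈ R ∧ f x = a ∧ f y = b}

theorem stmt_3 {V D : Type*} [Fintype V] [Fintype D] (hV : 3 ≤ Fintype.card V)
    (R : Set (V → D)) (h : Blockwise R) :
    ∀ x y : V, x ≠ y →
      ∃ (k : ℕ) (A B : Fin k → Set D),
        (∀ i j, i ≠ j → Disjoint (A i) (A j)) ∧
        (∀ i j, i ≠ j → Disjoint (B i) (B j)) ∧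
        (∀ a b : D, countMatrix R x y a b ≠ 0 ↔ ∃ ℓ, a ∈ A ℓ ∧ b ∈ B ℓ) ∧
        (∀ ℓ, ∃ r c : D → ℝ, ∀ a ∈ A ℓ, ∀ b ∈ B ℓ,
          (countMatrix R x y a b : ℝ) = r a * c b) := by
  classical
  intro x y hxy
  obtain ⟨k, A, B, hA, hB, hblock, hdec⟩ := h x y hxy
  refine ⟨k, A, B, hA, hB, ?_, ?_⟩
  · intro a b
    rw [← hblock a b, countMatrix, Nat.card_ne_zero]
    constructor
    · rintro ⟨⟨f, hf⟩, -⟩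
      exact ⟨f, hf.1, hf.2⟩
    · rintro ⟨f, hf, hfx, hfy⟩
      exact ⟨⟨⟨f, hf, hfx, hfy⟩⟩, Finite.of_fintype _⟩
  · intro ℓ
    obtain ⟨P, hxP, hyP, hdecP⟩ := hdec ℓ
    set S : Set (V → D) := {f ∈ R | f x ∈ A ℓ ∧ f y ∈ B ℓ} with hS
    refine ⟨fun a => (Nat.card {g : ↥P → D // g ∈ proj P S ∧ g ⟨x, hxP⟩ = a} : ℝ),
            fun b => (Nat.card {h0 : ↥(Pᶜ) → D // h0 ∈ proj Pᶜ S ∧ h0 ⟨y, hyP⟩ = b} : ℝ),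
            ?_⟩
    intro a ha b hb
    have e : {f : V → D // f ∈ R ∧ f x = a ∧ f y = b} ≃
        ({g : ↥P → D // g ∈ proj P S ∧ g ⟨x, hxP⟩ = a} ×
         {h0 : ↥(Pᶜ) → D // h0 ∈ proj Pᶜ S ∧ h0 ⟨y, hyP⟩ = b}) := by
      refine
        { toFun := fun f => ?_
          invFun := fun gh => ?_
          left_inv := ?_
          right_inv := ?_ }
      · have hfS : (f : V → D) ∈ S := by
          refine ⟨f.2.1, ?_, ?_⟩
          · rw [f.2.2.1]; exact ha
          · rw [f.2.2.2]; exact hb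
        have hp := (hdecP f.1).mp hfS
        exact (⟨fun v => f.1 v, hp.1, f.2.2.1⟩, ⟨fun v => f.1 v, hp.2, f.2.2.2⟩)
      · obtain ⟨⟨g, hg, hga⟩, ⟨h0, hh0, hh0b⟩⟩ := gh
        refine ⟨fun v => if hv : v ∈ P then g ⟨v, hv⟩ else h0 ⟨v, hv⟩, ?_⟩
        have hrestP : (fun v : ↥P => if hv : (v : V) ∈ P then g ⟨v, hv⟩ else h0 ⟨v, hv⟩) = g := by
          funext v
          simp [v.2]
        have hrestPc : (fun v : ↥(Pᶜ) => if hv : (v : V) ∈ P then g ⟨v, hv⟩ else h0 ⟨v, hv⟩) = h0 := by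
          funext v
          have : (v : V) ∉ P := v.2
          simp [this]
        have hfS : (fun v => if hv : v ∈ P then g ⟨v, hv⟩ else h0 ⟨v, hv⟩) ∈ S := by
          apply (hdecP _).mpr
          rw [hrestP, hrestPc]
          exact ⟨hg, hh0⟩
        refine ⟨hfS.1, ?_, ?_⟩
        · simpa [hxP] using hga
        · simpa [hyP] using hh0b
      · intro f
        apply Subtype.ext
        funext v
        by_cases hv : v ∈ P <;> simp [hv]
      · rintro ⟨⟨g, hg, hga⟩, ⟨h0, hh0, hh0b⟩⟩
        refine Prod.ext ?_ ?_ <;> apply Subtype.ext <;> funext v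
        · simp [v.2]
        · have : (v : V) ∉ P := v.2
          simp [this]
    rw [countMatrix, Nat.card_congr e, Nat.card_prod]
    push_cast
    ring
end

section
/- Let R(u⃗) be a constraint over finite domain D that is uniformly blockwise decomposable in variables x and y. Then there exists a partition of the scope ũ into {x,y}, ṽ, and w̃ such that R(u⃗) equals the conjunction π_{{x}∪ṽ}(R) ∧ π_{{y}∪w̃}(R) ∧ π_{{x,y}}(R); i.e., an assignment α on ũ is a solution of R iff its restrictions to {x}∪ṽ, {y}∪w̃, and {x,y} belong to the respective projections. -/
/-- `R` is uniformly blockwise decomposable in `x, y`: the selection matrix is a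
proper block matrix and a single partition `(P, Pᶜ)` with `x ∈ P`, `y ∉ P`
decomposes every block restriction. -/
def UniformBlockwiseIn {V D : Type*} (R : Set (V → D)) (x y : V) : Prop :=
  ∃ (k : ℕ) (A B : Fin k → Set D),
    (∀ i j, i ≠ j → Disjoint (A i) (A j)) ∧
    (∀ i j, i ≠ j → Disjoint (B i) (B j)) ∧
    (∀ a b : D, (∃ f ∈ R, f x = a ∧ f y = b) ↔ ∃ ℓ, a ∈ A ℓ ∧ b ∈ B ℓ) ∧
    (∃ P : Set V, x ∈ P ∧ y ∉ P ∧
      ∀ ℓ, Decomp {f ∈ R | f x ∈ A ℓ ∧ f y ∈ B ℓ} P)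

theorem stmt_4 {V D : Type*} [Fintype V] [Fintype D] (R : Set (V → D)) (x y : V)
    (hxy : x ≠ y) (h : UniformBlockwiseIn R x y) :
    ∃ Vs Ws : Set V,
      x ∉ Vs ∧ y ∉ Vs ∧ x ∉ Ws ∧ y ∉ Ws ∧ Disjoint Vs Ws ∧
      ({x, y} ∪ Vs ∪ Ws = (Set.univ : Set V)) ∧
      ∀ α : V → D, α ∈ R ↔
        ((fun v : ↥(insert x Vs) => α v) ∈ proj (insert x Vs) R ∧
         (fun v : ↥(insert y Ws) => α v) ∈ proj (insert y Ws) R ∧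
         (fun v : ↥({x, y} : Set V) => α v) ∈ proj {x, y} R) := by

  obtain ⟨k, A, B, hA, hB, hmat, P, hxP, hyP, hdec⟩ := h
  refine ⟨P \ {x, y}, Pᶜ \ {x, y}, by simp, by simp, by simp, by simp,
    (disjoint_compl_right).mono Set.diff_subset Set.diff_subset, ?_, ?_⟩
  · ext v; by_cases hv : v ∈ P <;> simp [hv] <;> tauto
  · intro α
    constructor
    · intro hα
      exact ⟨⟨α, hα, fun _ => rfl⟩, ⟨α, hα, fun _ => rfl⟩, ⟨α, hα, fun _ => rfl⟩⟩
    · rintro ⟨⟨f₁, hf₁R, hf₁⟩, ⟨f₂, hf₂R, hf₂⟩, ⟨f₃, hf₃R, hf₃⟩⟩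
      have hf₃x : f₃ x = α x := hf₃ ⟨x, Or.inl rfl⟩
      have hf₃y : f₃ y = α y := hf₃ ⟨y, Or.inr rfl⟩
      obtain ⟨ℓ, haℓ, hbℓ⟩ := (hmat (α x) (α y)).mp ⟨f₃, hf₃R, hf₃x, hf₃y⟩
      -- f₁ agrees with α on P
      have hf₁P : ∀ v ∈ P, f₁ v = α v := by
        intro v hv
        have hvmem : v ∈ insert x (P \ {x, y}) := by
          rcases eq_or_ne v x with rfl | hvx
          · exact Set.mem_insert _ _
          · refine Set.mem_insert_of_mem _ ⟨hv, ?_⟩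
            rintro (rfl | rfl)
            · exact hvx rfl
            · exact hyP hv
        exact hf₁ ⟨v, hvmem⟩
      -- f₂ agrees with α on Pᶜ
      have hf₂P : ∀ v ∈ Pᶜ, f₂ v = α v := by
        intro v hv
        have hvmem : v ∈ insert y (Pᶜ \ {x, y}) := by
          rcases eq_or_ne v y with rfl | hvy
          · exact Set.mem_insert _ _
          · refine Set.mem_insert_of_mem _ ⟨hv, ?_⟩
            rintro (rfl | rfl)
            · exact hv hxP
            · exact hvy rfl
        exact hf₂ ⟨v, hvmem⟩
      have hf₁x : f₁ x = α x := hf₁P x hxP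
      have hf₂y : f₂ y = α y := hf₂P y hyP
      -- f₁ lies in block ℓ
      obtain ⟨ℓ₁, ha₁, hb₁⟩ := (hmat (f₁ x) (f₁ y)).mp ⟨f₁, hf₁R, rfl, rfl⟩
      have hℓ₁ : ℓ₁ = ℓ := by
        by_contra hne
        exact (hA ℓ₁ ℓ hne).le_bot ⟨hf₁x ▸ ha₁, haℓ⟩
      obtain ⟨ℓ₂, ha₂, hb₂⟩ := (hmat (f₂ x) (f₂ y)).mp ⟨f₂, hf₂R, rfl, rfl⟩
      have hℓ₂ : ℓ₂ = ℓ := by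
        by_contra hne
        exact (hB ℓ₂ ℓ hne).le_bot ⟨hf₂y ▸ hb₂, hbℓ⟩
      have hf₁blk : f₁ ∈ {f ∈ R | f x ∈ A ℓ ∧ f y ∈ B ℓ} :=
        ⟨hf₁R, hℓ₁ ▸ ha₁, hℓ₁ ▸ hb₁⟩
      have hf₂blk : f₂ ∈ {f ∈ R | f x ∈ A ℓ ∧ f y ∈ B ℓ} :=
        ⟨hf₂R, hℓ₂ ▸ ha₂, hℓ₂ ▸ hb₂⟩
      have : α ∈ {f ∈ R | f x ∈ A ℓ ∧ f y ∈ B ℓ} := by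
        refine (hdec ℓ α).mpr ⟨⟨f₁, hf₁blk, fun v => hf₁P v v.2⟩,
          ⟨f₂, hf₂blk, fun v => hf₂P v v.2⟩⟩
      exact this.1
end

section
/- Let C = R(x, y, z⃗) be a constraint over finite domain D, and suppose there are two solutions a, b of C such that for every partition (z̃₁, z̃₂) of the remaining variables z̃, either the combined assignment a|_{{x}∪z̃₁} ∪ b|_{{y}∪z̃₂} is not a solution of C or a|_{{y}∪z̃₂} ∪ b|_{{x}∪z̃₁} is not a solution of C. Define F_n as the conjunction of n disjoint copies R(x_i, y_i, z⃗_i). Let (X̃, Ỹ) be a partition of the variables of F_n such that for each i, the variables x_i and y_i lie on opposite sides. Then every rectangle cover of the solution set of F_n in which all rectangles respect the partition (X̃, Ỹ) has size at least 2^n. -/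
open Classical in
/-- Combine two assignments along a partition: take `f` on `P` and `g` off `P`. -/
noncomputable def combine {X D : Type*} (P : Set X) (f g : X → D) : X → D :=
  fun v => if v ∈ P then f v else g v

/-- A set of assignments is a (combinatorial) rectangle with respect to the partition
`(P, Pᶜ)` iff it is closed under combining two of its members along `P`
(equivalently, it is the product of its two projections). -/
def IsRect {X D : Type*} (P : Set X) (r : Set (X → D)) : Prop :=
  ∀ f ∈ r, ∀ g ∈ r, combine P f g ∈ r

lemma combine_compl {X D : Type*} (P : Set X) (f g : X → D) :
    combine Pᶜ f g = combine P g f := by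
  funext v
  by_cases h : v ∈ P <;> simp [combine, h]

/-- The fooling-set assignment: copy `i` uses `a` if `s i`, else `b`. -/
noncomputable def gfun {W D : Type*} {n : ℕ} (a b : W → D) (s : Fin n → Bool) :
    Fin n × W → D :=
  fun p => if s p.1 then a p.2 else b p.2

lemma combine_gfun {W D : Type*} {n : ℕ} (a b : W → D) (s t : Fin n → Bool)
    (P : Set (Fin n × W)) (i : Fin n) (hsi : s i = true) (hti : t i = false) :
    (fun w => combine P (gfun a b s) (gfun a b t) (i, w))
      = combine {w | (i, w) ∈ P} a b := by
  funext w
  by_cases hw : (i, w) ∈ P <;>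
    simp [combine, gfun, hw, hsi, hti]

theorem stmt_8 {W D : Type*} [Fintype W] [Fintype D] (x y : W) (hxy : x ≠ y)
    (R : Set (W → D)) (a b : W → D) (ha : a ∈ R) (hb : b ∈ R)
    (hfool : ∀ Z₁ : Set W, Z₁ ⊆ {x, y}ᶜ →
      combine ({x} ∪ Z₁) a b ∉ R ∨ combine ({x} ∪ Z₁) b a ∉ R)
    (n : ℕ)
    -- the solution set of `F_n`, the conjunction of `n` disjoint copies of `R`
    (sol : Set (Fin n × W → D))
    (hsol : sol = {g | ∀ i : Fin n, (fun w => g (i, w)) ∈ R})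
    (P : Set (Fin n × W))
    (hP : ∀ i : Fin n, ((i, x) ∈ P ↔ (i, y) ∉ P))
    (𝒞 : Finset (Set (Fin n × W → D)))
    (hrect : ∀ r ∈ 𝒞, IsRect P r ∧ r ⊆ sol)
    (hcover : ∀ g ∈ sol, ∃ r ∈ 𝒞, g ∈ r) :
    2 ^ n ≤ 𝒞.card := by
  classical
  subst hsol
  have hgsol : ∀ s : Fin n → Bool,
      gfun a b s ∈ {g : Fin n × W → D | ∀ i : Fin n, (fun w => g (i, w)) ∈ R} := by
    intro s i
    show (fun w => gfun a b s (i, w)) ∈ R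
    cases h : s i
    · have e : (fun w => gfun a b s (i, w)) = b := by funext w; simp [gfun, h]
      rw [e]; exact hb
    · have e : (fun w => gfun a b s (i, w)) = a := by funext w; simp [gfun, h]
      rw [e]; exact ha
  have key : ∀ s t : Fin n → Bool, ∀ r ∈ 𝒞, gfun a b s ∈ r → gfun a b t ∈ r → s = t := by
    intro s t r hr hs ht
    by_contra hst
    obtain ⟨i, hi⟩ : ∃ i, s i ≠ t i := Function.ne_iff.mp hst
    obtain ⟨hrect', hsub⟩ := hrect r hr
    have h1 := hsub (hrect' _ hs _ ht) i
    have h2 := hsub (hrect' _ ht _ hs) i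
    set Q : Set W := {w | (i, w) ∈ P} with hQ
    have hab : combine Q a b ∈ R ∧ combine Q b a ∈ R := by
      cases hsi : s i <;> cases hti : t i
      · rw [hsi, hti] at hi; exact absurd rfl hi
      · rw [combine_gfun a b t s P i hti hsi] at h2
        have h1' : (fun w => combine P (gfun a b s) (gfun a b t) (i, w)) = combine Q b a := by
          rw [← combine_compl]
          funext w
          by_cases hw : (i, w) ∈ P <;> simp [combine, gfun, hw, hsi, hti, hQ, Set.mem_setOf_eq]
        rw [h1'] at h1
        exact ⟨h2, h1⟩
      · rw [combine_gfun a b s t P i hsi hti] at h1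
        have h2' : (fun w => combine P (gfun a b t) (gfun a b s) (i, w)) = combine Q b a := by
          rw [← combine_compl]
          funext w
          by_cases hw : (i, w) ∈ P <;> simp [combine, gfun, hw, hsi, hti, hQ, Set.mem_setOf_eq]
        rw [h2'] at h2
        exact ⟨h1, h2⟩
      · rw [hsi, hti] at hi; exact absurd rfl hi
    by_cases hx : x ∈ Q
    · have hy : y ∉ Q := (hP i).mp hx
      have hZ : Q \ {x} ⊆ ({x, y} : Set W)ᶜ := by
        intro w hw
        simp only [Set.mem_diff, Set.mem_singleton_iff] at hw
        intro hmem
        rcases hmem with h | h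
        · exact hw.2 h
        · exact hy (h ▸ hw.1)
      have heq : ({x} ∪ (Q \ {x}) : Set W) = Q := by
        ext w; by_cases hw : w = x <;> simp [hw, hx]
      rcases hfool (Q \ {x}) hZ with h | h <;> rw [heq] at h
      · exact h hab.1
      · exact h hab.2
    · have hy : y ∈ Q := by
        by_contra hy
        exact hx ((hP i).mpr hy)
      have hZ : Qᶜ \ {x} ⊆ ({x, y} : Set W)ᶜ := by
        intro w hw
        simp only [Set.mem_diff, Set.mem_singleton_iff, Set.mem_compl_iff] at hw
        intro hmem
        rcases hmem with h | h
        · exact hw.2 h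
        · exact hw.1 (h ▸ hy)
      have heq : ({x} ∪ (Qᶜ \ {x}) : Set W) = Qᶜ := by
        ext w; by_cases hw : w = x <;> simp [hw, hx]
      rcases hfool (Qᶜ \ {x}) hZ with h | h <;> rw [heq, combine_compl] at h
      · exact h hab.2
      · exact h hab.1
  choose F hF hgF using fun s => hcover (gfun a b s) (hgsol s)
  have hinj : Function.Injective (fun s => (⟨F s, hF s⟩ : {r // r ∈ 𝒞})) := by
    intro s t hFst
    simp only [Subtype.mk.injEq] at hFst
    exact key s t (F s) (hF s) (hgF s) (hFst ▸ hgF t)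
  calc 2 ^ n = Fintype.card (Fin n → Bool) := by simp
    _ ≤ Fintype.card {r // r ∈ 𝒞} := Fintype.card_le_of_injective _ hinj
    _ = 𝒞.card := Fintype.card_coe _
end

section
/- Over the Boolean domain {0,1}, every relation that is pp-definable from the constraint language E = {=, ≠, U_0, U_1} (equality, disequality, and the unary constants) is uniformly blockwise decomposable. -/
def UniformBlockwise {V D : Type*} (R : Set (V → D)) : Prop :=
  ∀ x y : V, x ≠ y → UniformBlockwiseIn R x y

/-- `R` (with scope `W`) is pp-definable over `E = {=, ≠, U₀, U₁}` on the Boolean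
domain: there are auxiliary (existentially projected) variables `U` and sets of
equality atoms, disequality atoms and unary constant atoms whose solution set
projects onto `R`. -/
def PPDefinableOverE {W : Type*} (R : Set (W → Bool)) : Prop :=
  ∃ (U : Type) (_ : Fintype U)
    (Eqs Nes : Set ((W ⊕ U) × (W ⊕ U))) (U₀ U₁ : Set (W ⊕ U)),
    R = {g | ∃ f : W ⊕ U → Bool,
        ((∀ p ∈ Eqs, f p.1 = f p.2) ∧ (∀ p ∈ Nes, f p.1 ≠ f p.2) ∧
         (∀ v ∈ U₀, f v = false) ∧ (∀ v ∈ U₁, f v = true)) ∧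
        ∀ w : W, f (Sum.inl w) = g w}


-- Boolean facts
private lemma bxor3_ne : ∀ a b c a' b' c' : Bool, a ≠ a' → b ≠ b' → c ≠ c' →
    xor (xor a b) c ≠ xor (xor a' b') c' := by decide
private lemma bmaj_ne : ∀ a b c a' b' c' : Bool, a ≠ a' → b ≠ b' → c ≠ c' →
    ((a && b) || (a && c) || (b && c)) ≠ ((a' && b') || (a' && c') || (b' && c')) := by decide
private lemma bx_cancel : ∀ a r : Bool, xor (xor a r) r = a := by decide
private lemma bkey1 : ∀ a b r : Bool, xor (xor (xor a r) (xor b r)) r = xor (xor a b) r := by decide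
private lemma bkey2 : ∀ a b r : Bool,
    ((xor a r && xor b r) || (xor a r && r) || (xor b r && r)) = xor (a && b) r := by decide

-- closure of R under minority and majority
private lemma ppd_min {W : Type*} {R : Set (W → Bool)} (h : PPDefinableOverE R) :
    ∀ g1 ∈ R, ∀ g2 ∈ R, ∀ g3 ∈ R, (fun w => xor (xor (g1 w) (g2 w)) (g3 w)) ∈ R := by
  obtain ⟨U, _, Eqs, Nes, U0, U1, hR⟩ := h
  subst hR
  rintro g1 ⟨f1, ⟨e1, n1, z1, o1⟩, p1⟩ g2 ⟨f2, ⟨e2, n2, z2, o2⟩, p2⟩ g3 ⟨f3, ⟨e3, n3, z3, o3⟩, p3⟩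
  refine ⟨fun t => xor (xor (f1 t) (f2 t)) (f3 t), ⟨?_, ?_, ?_, ?_⟩, ?_⟩
  · intro p hp; dsimp only; rw [e1 p hp, e2 p hp, e3 p hp]
  · intro p hp; exact bxor3_ne _ _ _ _ _ _ (n1 p hp) (n2 p hp) (n3 p hp)
  · intro v hv; dsimp only; rw [z1 v hv, z2 v hv, z3 v hv]; rfl
  · intro v hv; dsimp only; rw [o1 v hv, o2 v hv, o3 v hv]; rfl
  · intro w; dsimp only; rw [p1 w, p2 w, p3 w]

private lemma ppd_maj {W : Type*} {R : Set (W → Bool)} (h : PPDefinableOverE R) :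
    ∀ g1 ∈ R, ∀ g2 ∈ R, ∀ g3 ∈ R,
      (fun w => (g1 w && g2 w) || (g1 w && g3 w) || (g2 w && g3 w)) ∈ R := by
  obtain ⟨U, _, Eqs, Nes, U0, U1, hR⟩ := h
  subst hR
  rintro g1 ⟨f1, ⟨e1, n1, z1, o1⟩, p1⟩ g2 ⟨f2, ⟨e2, n2, z2, o2⟩, p2⟩ g3 ⟨f3, ⟨e3, n3, z3, o3⟩, p3⟩
  refine ⟨fun t => (f1 t && f2 t) || (f1 t && f3 t) || (f2 t && f3 t), ⟨?_, ?_, ?_, ?_⟩, ?_⟩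
  · intro p hp; dsimp only; rw [e1 p hp, e2 p hp, e3 p hp]
  · intro p hp; exact bmaj_ne _ _ _ _ _ _ (n1 p hp) (n2 p hp) (n3 p hp)
  · intro v hv; dsimp only; rw [z1 v hv, z2 v hv, z3 v hv]; rfl
  · intro v hv; dsimp only; rw [o1 v hv, o2 v hv, o3 v hv]; rfl
  · intro w; dsimp only; rw [p1 w, p2 w, p3 w]
-- Bool helper facts
private lemma bkrel : ∀ a b p q : Bool, xor a p = xor b q → b = xor a (xor p q) := by decide
private lemma binj : ∀ p q d : Bool, p ≠ q → xor p d ≠ xor q d := by decide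
private lemma bzero : ∀ a r : Bool, xor a r = false → a = r := by decide
private lemma bflip : ∀ a b : Bool, b ≠ a → xor b true = a := by decide
private lemma bswap : ∀ a m r : Bool, xor (xor a r) m = xor (xor a m) r := by decide
private lemma bxx : ∀ a b r : Bool, xor (xor a r) (xor b r) = xor a b := by decide
private lemma bb1 : ∀ a b : Bool, xor b (xor a b && true) = a := by decide
private lemma bxf : ∀ a : Bool, xor a false = a := by decide
private lemma bfx : ∀ a : Bool, xor false a = a := by decide

/-- the coset-translate of `R` by `r0`. -/
private def Lset {W : Type*} (R : Set (W → Bool)) (r0 : W → Bool) : Set (W → Bool) :=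
  {g | (fun v => xor (g v) (r0 v)) ∈ R}

private lemma mem_R_iff_Lset {W : Type*} {R : Set (W → Bool)} (r0 : W → Bool) (f : W → Bool) :
    f ∈ R ↔ (fun v => xor (f v) (r0 v)) ∈ Lset R r0 := by
  have e : (fun v => xor (xor (f v) (r0 v)) (r0 v)) = f := funext fun v => bx_cancel _ _
  constructor
  · intro hf
    show (fun v => xor (xor (f v) (r0 v)) (r0 v)) ∈ R
    rw [e]; exact hf
  · intro hf
    have h2 : (fun v => xor (xor (f v) (r0 v)) (r0 v)) ∈ R := hf
    rwa [e] at h2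

private lemma Lset_sum {W : Type*} {R : Set (W → Bool)} {r0 : W → Bool} (hr0 : r0 ∈ R)
    (hmin : ∀ g1 ∈ R, ∀ g2 ∈ R, ∀ g3 ∈ R, (fun w => xor (xor (g1 w) (g2 w)) (g3 w)) ∈ R) :
    ∀ a ∈ Lset R r0, ∀ b ∈ Lset R r0, (fun v => xor (a v) (b v)) ∈ Lset R r0 := by
  intro a ha b hb
  have ha' : (fun v => xor (a v) (r0 v)) ∈ R := ha
  have hb' : (fun v => xor (b v) (r0 v)) ∈ R := hb
  have h3 := hmin _ ha' _ hb' _ hr0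
  have e : (fun w => xor (xor (xor (a w) (r0 w)) (xor (b w) (r0 w))) (r0 w))
      = (fun v => xor (xor (a v) (b v)) (r0 v)) := funext fun v => bkey1 _ _ _
  show (fun v => xor (xor (a v) (b v)) (r0 v)) ∈ R
  rw [← e]; exact h3

private lemma Lset_and {W : Type*} {R : Set (W → Bool)} {r0 : W → Bool} (hr0 : r0 ∈ R)
    (hmaj : ∀ g1 ∈ R, ∀ g2 ∈ R, ∀ g3 ∈ R,
      (fun w => (g1 w && g2 w) || (g1 w && g3 w) || (g2 w && g3 w)) ∈ R) :
    ∀ a ∈ Lset R r0, ∀ b ∈ Lset R r0, (fun v => a v && b v) ∈ Lset R r0 := by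
  intro a ha b hb
  have ha' : (fun v => xor (a v) (r0 v)) ∈ R := ha
  have hb' : (fun v => xor (b v) (r0 v)) ∈ R := hb
  have h3 := hmaj _ ha' _ hb' _ hr0
  have e : (fun w => (xor (a w) (r0 w) && xor (b w) (r0 w)) ||
        (xor (a w) (r0 w) && r0 w) || (xor (b w) (r0 w) && r0 w))
      = (fun v => xor (a v && b v) (r0 v)) := funext fun v => bkey2 _ _ _
  show (fun v => xor (a v && b v) (r0 v)) ∈ R
  rw [← e]; exact h3

private lemma inf_mem {W : Type*} {L : Set (W → Bool)}
    (hand : ∀ a ∈ L, ∀ b ∈ L, (fun v => a v && b v) ∈ L) :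
    ∀ S : Finset (W → Bool), S.Nonempty → (∀ g ∈ S, g ∈ L) →
      (fun v => decide (∀ g ∈ S, g v = true)) ∈ L := by
  intro S hS
  induction hS using Finset.Nonempty.cons_induction with
  | singleton a =>
    intro hsub
    have e : (fun v => decide (∀ g ∈ ({a} : Finset (W → Bool)), g v = true)) = a := by
      funext v; simp
    rw [e]; exact hsub a (Finset.mem_singleton_self a)
  | cons a s ha hs ih =>
    intro hsub
    have h1 : a ∈ L := hsub a (Finset.mem_cons_self a s)
    have h2 := ih (fun g hg => hsub g (Finset.mem_cons_of_mem hg))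
    have e : (fun v => decide (∀ g ∈ Finset.cons a s ha, g v = true))
        = fun v => a v && decide (∀ g ∈ s, g v = true) := by
      funext v
      simp [Finset.forall_mem_cons]
    rw [e]; exact hand a h1 _ h2

private lemma indicator_mem {W : Type*} [Fintype W] {L : Set (W → Bool)}
    (hsum : ∀ a ∈ L, ∀ b ∈ L, (fun v => xor (a v) (b v)) ∈ L)
    (hand : ∀ a ∈ L, ∀ b ∈ L, (fun v => a v && b v) ∈ L)
    (x : W) (hx : ∃ g ∈ L, g x = true) :
    ∃ m ∈ L, ∀ v, (m v = true ↔ ∀ g ∈ L, g x = g v) := by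
  have hfin : {g | g ∈ L ∧ g x = true}.Finite := Set.toFinite _
  set S := hfin.toFinset with hSdef
  have hmemS : ∀ g, g ∈ S ↔ g ∈ L ∧ g x = true := by
    intro g; rw [hSdef, Set.Finite.mem_toFinset]; rfl
  have hSne : S.Nonempty := by
    obtain ⟨g, hg, hgx⟩ := hx; exact ⟨g, (hmemS g).2 ⟨hg, hgx⟩⟩
  set m : W → Bool := fun v => decide (∀ g ∈ S, g v = true) with hm
  have hmchar : ∀ u, m u = true ↔ ∀ g ∈ S, g u = true := by
    intro u; rw [hm]; simp
  have hmL : m ∈ L := by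
    rw [hm]; exact inf_mem hand S hSne (fun g hg => ((hmemS g).1 hg).1)
  have hmx : m x = true := (hmchar x).2 (fun g hg => ((hmemS g).1 hg).2)
  refine ⟨m, hmL, fun v => ⟨?_, ?_⟩⟩
  · intro hmv g hgL
    by_cases hgx : g x = true
    · have hgS : g ∈ S := (hmemS g).2 ⟨hgL, hgx⟩
      rw [hgx, (hmchar v).1 hmv g hgS]
    · have hgx' : g x = false := by
        cases hc : g x
        · rfl
        · exact absurd hc hgx
      have hg'L : (fun u => xor (g u) (m u)) ∈ L := hsum g hgL m hmL
      have hg'S : (fun u => xor (g u) (m u)) ∈ S := by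
        refine (hmemS _).2 ⟨hg'L, ?_⟩
        show xor (g x) (m x) = true
        rw [hgx', hmx]; rfl
      have h3 : xor (g v) (m v) = true := (hmchar v).1 hmv _ hg'S
      rw [hmv] at h3
      have hgv : g v = false := by
        cases hc : g v
        · rfl
        · rw [hc] at h3; exact absurd h3 (by decide)
      rw [hgx', hgv]
  · intro hsim
    refine (hmchar v).2 fun g hgS => ?_
    have h := (hmemS g).1 hgS
    rw [← hsim g h.1]; exact h.2

theorem stmt_11 {W : Type*} [Fintype W] (R : Set (W → Bool))
    (h : PPDefinableOverE R) : UniformBlockwise R := by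
  have hmin := ppd_min h
  have hmaj := ppd_maj h
  intro x y hxy
  rcases R.eq_empty_or_nonempty with hRe | ⟨r0, hr0⟩
  · subst hRe
    refine ⟨0, (fun i => i.elim0), (fun i => i.elim0), (fun i => i.elim0),
      (fun i => i.elim0), ?_, {x}, rfl, ?_, fun ℓ => ℓ.elim0⟩
    · intro a b
      constructor
      · rintro ⟨f, hf, -⟩; exact absurd hf (Set.notMem_empty f)
      · rintro ⟨ℓ, -⟩; exact ℓ.elim0
    · exact fun hy => hxy (Set.mem_singleton_iff.mp hy).symm
  have hLsum := Lset_sum hr0 hmin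
  have hLand := Lset_and hr0 hmaj
  by_cases hsim : ∀ g ∈ Lset R r0, g x = g y
  · -- Case A : x and y are linked
    set d := xor (r0 x) (r0 y) with hd
    have hrel : ∀ f ∈ R, f y = xor (f x) d := by
      intro f hf
      have hfL := (mem_R_iff_Lset r0 f).1 hf
      have h2 := hsim _ hfL
      exact bkrel (f x) (f y) (r0 x) (r0 y) h2
    set tb : Fin 2 → Bool := fun i => decide (i = 1) with htbdef
    have htb : ∀ i j : Fin 2, i ≠ j → tb i ≠ tb j := by
      rw [htbdef]; decide
    refine ⟨2, fun i => {a | a = tb i ∧ ∃ f ∈ R, f x = a},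
      fun i => {b | b = xor (tb i) d ∧ ∃ f ∈ R, f y = b}, ?_, ?_, ?_, {x}, rfl, ?_, ?_⟩
    · intro i j hij
      rw [Set.disjoint_left]
      rintro a ⟨ha1, -⟩ ⟨ha2, -⟩
      exact htb i j hij (ha1.symm.trans ha2)
    · intro i j hij
      rw [Set.disjoint_left]
      rintro b ⟨hb1, -⟩ ⟨hb2, -⟩
      exact binj (tb i) (tb j) d (htb i j hij) (hb1.symm.trans hb2)
    · intro a b
      constructor
      · rintro ⟨f, hf, hfx, hfy⟩
        have tbeq : tb (if a then 1 else 0) = a := by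
          rw [htbdef]; cases a <;> rfl
        refine ⟨if a then 1 else 0, ⟨tbeq.symm, f, hf, hfx⟩, ⟨?_, f, hf, hfy⟩⟩
        rw [tbeq, ← hfx, ← hfy]
        exact hrel f hf
      · rintro ⟨ℓ, ⟨ha, f, hf, hfx⟩, ⟨hb, -⟩⟩
        refine ⟨f, hf, hfx, ?_⟩
        rw [hb, ← ha, ← hfx]
        exact hrel f hf
    · exact fun hy => hxy (Set.mem_singleton_iff.mp hy).symm
    · intro ℓ f
      constructor
      · intro hf; exact ⟨⟨f, hf, fun _ => rfl⟩, ⟨f, hf, fun _ => rfl⟩⟩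
      · rintro ⟨⟨g1, hg1, he1⟩, ⟨g2, hg2, he2⟩⟩
        have hx1 : g1 x = f x := he1 ⟨x, rfl⟩
        have e : f = g2 := by
          funext v
          by_cases hv : v = x
          · subst hv
            rw [← hx1, hg1.2.1.1]
            exact hg2.2.1.1.symm
          · exact (he2 ⟨v, hv⟩).symm
        rw [e]; exact hg2
  · -- Case B : x and y are independent
    push_neg at hsim
    obtain ⟨g0, hg0L, hg0ne⟩ := hsim
    refine ⟨1, fun _ => {a | ∃ f ∈ R, f x = a}, fun _ => {b | ∃ f ∈ R, f y = b},
      (fun i j hij => absurd (Subsingleton.elim i j) hij),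
      (fun i j hij => absurd (Subsingleton.elim i j) hij), ?_,
      {v | ∀ g ∈ Lset R r0, g x = g v}, fun g _ => rfl, fun hy => hg0ne (hy g0 hg0L), ?_⟩
    · intro a b
      constructor
      · rintro ⟨f, hf, hfx, hfy⟩
        exact ⟨0, ⟨f, hf, hfx⟩, ⟨f, hf, hfy⟩⟩
      · rintro ⟨-, ⟨f1, hf1, hf1x⟩, ⟨f2, hf2, hf2y⟩⟩
        by_cases hfx : ∀ g ∈ Lset R r0, g x = false
        · have hc : ∀ f ∈ R, f x = r0 x := by
            intro f hf
            exact bzero _ _ (hfx _ ((mem_R_iff_Lset r0 f).1 hf))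
          exact ⟨f2, hf2, by rw [hc f2 hf2, ← hc f1 hf1, hf1x], hf2y⟩
        by_cases hfy : ∀ g ∈ Lset R r0, g y = false
        · have hc : ∀ f ∈ R, f y = r0 y := by
            intro f hf
            exact bzero _ _ (hfy _ ((mem_R_iff_Lset r0 f).1 hf))
          exact ⟨f1, hf1, hf1x, by rw [hc f1 hf1, ← hc f2 hf2, hf2y]⟩
        · push_neg at hfx
          obtain ⟨g, hgL, hgx⟩ := hfx
          obtain ⟨m, hmL, hmc⟩ := indicator_mem hLsum hLand x ⟨g, hgL, Bool.ne_false_iff.mp hgx⟩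
          by_cases hfa : f2 x = a
          · exact ⟨f2, hf2, hfa, hf2y⟩
          · have hmy : m y = false := by
              cases hc : m y
              · rfl
              · exact absurd ((hmc y).1 hc g0 hg0L) hg0ne
            refine ⟨fun v => xor (f2 v) (m v), ?_, ?_, ?_⟩
            · have h3 := hLsum _ ((mem_R_iff_Lset r0 f2).1 hf2) m hmL
              have e : (fun v => xor (xor (f2 v) (r0 v)) (m v))
                  = (fun v => xor (xor (f2 v) (m v)) (r0 v)) := funext fun v => bswap _ _ _
              refine (mem_R_iff_Lset r0 _).2 ?_
              show (fun v => xor (xor (f2 v) (m v)) (r0 v)) ∈ Lset R r0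
              rw [← e]; exact h3
            · show xor (f2 x) (m x) = a
              rw [(hmc x).2 (fun g _ => rfl)]
              exact bflip a (f2 x) hfa
            · show xor (f2 y) (m y) = b
              rw [hmy, bxf]; exact hf2y
    · intro ℓ
      have hblock : {f ∈ R | f x ∈ {a | ∃ f ∈ R, f x = a} ∧ f y ∈ {b | ∃ f ∈ R, f y = b}} = R :=
        Set.ext fun f => ⟨fun hf => hf.1, fun hf => ⟨hf, ⟨f, hf, rfl⟩, ⟨f, hf, rfl⟩⟩⟩
      rw [hblock]
      intro f
      constructor
      · intro hf; exact ⟨⟨f, hf, fun _ => rfl⟩, ⟨f, hf, fun _ => rfl⟩⟩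
      · rintro ⟨⟨g1, hg1, he1⟩, ⟨g2, hg2, he2⟩⟩
        by_cases hforced : ∀ g ∈ Lset R r0, g x = false
        · have e : f = g2 := by
            funext v
            by_cases hv : (∀ g ∈ Lset R r0, g x = g v)
            · have h1 : g1 v = r0 v := by
                have h2 := hv _ ((mem_R_iff_Lset r0 g1).1 hg1)
                have h3 := hforced _ ((mem_R_iff_Lset r0 g1).1 hg1)
                exact bzero _ _ (h2 ▸ h3)
              have h2 : g2 v = r0 v := by
                have h2 := hv _ ((mem_R_iff_Lset r0 g2).1 hg2)
                have h3 := hforced _ ((mem_R_iff_Lset r0 g2).1 hg2)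
                exact bzero _ _ (h2 ▸ h3)
              have h0 : g1 v = f v := he1 ⟨v, hv⟩
              rw [← h0, h1]
              exact h2.symm
            · exact (he2 ⟨v, hv⟩).symm
          rw [e]; exact hg2
        · push_neg at hforced
          obtain ⟨g, hgL, hgx⟩ := hforced
          obtain ⟨m, hmL, hmc⟩ := indicator_mem hLsum hLand x ⟨g, hgL, Bool.ne_false_iff.mp hgx⟩
          have hδL : (fun v => xor (g1 v) (g2 v) && m v) ∈ Lset R r0 := by
            have h12 := hLsum _ ((mem_R_iff_Lset r0 g1).1 hg1) _ ((mem_R_iff_Lset r0 g2).1 hg2)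
            have e : (fun v => xor (xor (g1 v) (r0 v)) (xor (g2 v) (r0 v)))
                = fun v => xor (g1 v) (g2 v) := funext fun v => bxx _ _ _
            rw [e] at h12
            exact hLand _ h12 m hmL
          have e : f = fun v => xor (g2 v) (xor (g1 v) (g2 v) && m v) := by
            funext v
            by_cases hv : (∀ g ∈ Lset R r0, g x = g v)
            · have hmv : m v = true := (hmc v).2 hv
              have h1 : g1 v = f v := he1 ⟨v, hv⟩
              show f v = xor (g2 v) (xor (g1 v) (g2 v) && m v)
              rw [hmv, ← h1]
              exact (bb1 _ _).symm
            · have hmv : m v = false := by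
                cases hc : m v
                · rfl
                · exact absurd ((hmc v).1 hc) hv
              show f v = xor (g2 v) (xor (g1 v) (g2 v) && m v)
              rw [hmv, Bool.and_false, bxf]
              exact (he2 ⟨v, hv⟩).symm
          rw [e]
          have h3 := hLsum _ ((mem_R_iff_Lset r0 g2).1 hg2) _ hδL
          have e2 : (fun v => xor (xor (g2 v) (r0 v)) (xor (g1 v) (g2 v) && m v))
              = (fun v => xor (xor (g2 v) (xor (g1 v) (g2 v) && m v)) (r0 v)) :=
            funext fun v => bswap _ _ _
          refine (mem_R_iff_Lset r0 _).2 ?_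
          show (fun v => xor (xor (g2 v) (xor (g1 v) (g2 v) && m v)) (r0 v)) ∈ Lset R r0
          rw [← e2]; exact h3
end

section
/- Over the Boolean domain, if an indecomposable constraint R(x⃗) with at least two variables is blockwise decomposable, then R has exactly two solutions, these two solutions differ in every variable, and consequently R is expressible as a conjunction of binary equality and disequality constraints. -/
lemma bool_eq_of_ne_of_ne {a b c : Bool} (h1 : a ≠ c) (h2 : b ≠ c) : a = b := by
  revert h1 h2; revert a b c; decide

lemma bool_eq_or {a b c : Bool} (h : b ≠ c) : a = b ∨ a = c := by
  revert h; revert a b c; decide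

lemma R_nonempty {V : Type*} [Fintype V] (hV : 2 ≤ Fintype.card V)
    (R : Set (V → Bool))
    (hindec : ¬ ∃ P : Set V, P.Nonempty ∧ P ≠ Set.univ ∧ Decomp R P) :
    R.Nonempty := by
  by_contra h
  rw [Set.not_nonempty_iff_eq_empty] at h
  subst h
  obtain ⟨x, y, hxy⟩ := Fintype.exists_pair_of_one_lt_card (α := V) (by omega)
  refine hindec ⟨{x}, ⟨x, rfl⟩, ?_, ?_⟩
  · intro he
    have : y ∈ ({x} : Set V) := he ▸ Set.mem_univ y
    exact hxy (by simpa using this.symm)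
  · intro f
    simp [proj]

lemma key {V : Type*} [Fintype V] (hV : 2 ≤ Fintype.card V)
    (R : Set (V → Bool))
    (hindec : ¬ ∃ P : Set V, P.Nonempty ∧ P ≠ Set.univ ∧ Decomp R P)
    (hbd : Blockwise R) (x y : V) (hxy : x ≠ y) :
    ∃ f0 ∈ R, ∃ f1 ∈ R, f0 x ≠ f1 x ∧ f0 y ≠ f1 y ∧
      ∀ f ∈ R, (f x = f0 x → f y = f0 y) ∧ (f x = f1 x → f y = f1 y) := by
  obtain ⟨k, A, B, hA, hB, hsel, hdec⟩ := hbd x y hxy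
  obtain ⟨f0, hf0⟩ := R_nonempty hV R hindec
  obtain ⟨ℓ0, hA0, hB0⟩ := (hsel (f0 x) (f0 y)).mp ⟨f0, hf0, rfl, rfl⟩
  by_cases hall : ∀ f ∈ R, f x ∈ A ℓ0 ∧ f y ∈ B ℓ0
  · exfalso
    obtain ⟨P, hxP, hyP, hdecP⟩ := hdec ℓ0
    refine hindec ⟨P, ⟨x, hxP⟩, ?_, ?_⟩
    · intro he; exact hyP (he ▸ Set.mem_univ y)
    · have hRe : {f ∈ R | f x ∈ A ℓ0 ∧ f y ∈ B ℓ0} = R :=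
        Set.ext fun f => ⟨fun h => h.1, fun h => ⟨h, hall f h⟩⟩
      rwa [hRe] at hdecP
  · push_neg at hall
    obtain ⟨f1, hf1, hbad⟩ := hall
    obtain ⟨ℓ1, hA1, hB1⟩ := (hsel (f1 x) (f1 y)).mp ⟨f1, hf1, rfl, rfl⟩
    have hℓ : ℓ1 ≠ ℓ0 := by
      intro he; subst he; exact absurd hB1 (hbad hA1)
    have hx01 : f0 x ≠ f1 x := fun h =>
      Set.disjoint_left.mp (hA ℓ0 ℓ1 hℓ.symm) hA0 (h ▸ hA1)
    have hy01 : f0 y ≠ f1 y := fun h =>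
      Set.disjoint_left.mp (hB ℓ0 ℓ1 hℓ.symm) hB0 (h ▸ hB1)
    refine ⟨f0, hf0, f1, hf1, hx01, hy01, ?_⟩
    intro f hf
    obtain ⟨ℓ, hAℓ, hBℓ⟩ := (hsel (f x) (f y)).mp ⟨f, hf, rfl, rfl⟩
    constructor
    · intro h
      have hℓeq : ℓ = ℓ0 := by
        by_contra hne
        exact Set.disjoint_left.mp (hA ℓ ℓ0 hne) hAℓ (h ▸ hA0)
      rw [hℓeq] at hBℓ
      have hne1 : f y ≠ f1 y := fun he =>
        Set.disjoint_left.mp (hB ℓ0 ℓ1 hℓ.symm) hBℓ (he ▸ hB1)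
      exact bool_eq_of_ne_of_ne hne1 hy01
    · intro h
      have hℓeq : ℓ = ℓ1 := by
        by_contra hne
        exact Set.disjoint_left.mp (hA ℓ ℓ1 hne) hAℓ (h ▸ hA1)
      rw [hℓeq] at hBℓ
      have hne0 : f y ≠ f0 y := fun he =>
        Set.disjoint_left.mp (hB ℓ1 ℓ0 hℓ) hBℓ (he ▸ hB0)
      exact bool_eq_of_ne_of_ne hne0 hy01.symm

lemma transfer {V : Type*} {R : Set (V → Bool)} {x v : V} {f0 f1 f0' f1' : V → Bool}
    (hf0 : f0 ∈ R) (hf1 : f1 ∈ R) (hx : f0 x ≠ f1 x) (hx' : f0' x ≠ f1' x)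
    (hv' : f0' v ≠ f1' v)
    (hprop : ∀ f ∈ R, (f x = f0' x → f v = f0' v) ∧ (f x = f1' x → f v = f1' v))
    (h0 : f0 x = f0' x) :
    f0 v ≠ f1 v ∧ ∀ f ∈ R, (f x = f0 x → f v = f0 v) ∧ (f x = f1 x → f v = f1 v) := by
  have h1 : f1 x = f1' x :=
    bool_eq_of_ne_of_ne (fun he => hx (h0.trans he.symm)) hx'.symm
  have e0 : f0 v = f0' v := (hprop f0 hf0).1 h0
  have e1 : f1 v = f1' v := (hprop f1 hf1).2 h1
  constructor
  · rw [e0, e1]; exact hv'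
  · intro f hf
    exact ⟨fun h => (((hprop f hf).1 (h.trans h0)).trans e0.symm),
           fun h => (((hprop f hf).2 (h.trans h1)).trans e1.symm)⟩

lemma bool_flip {a b : Bool} (h : a ≠ b) : b = !a := by
  revert h; revert a b; decide

lemma bool_not_inj {a b : Bool} (h : !a = !b) : a = b := by
  revert h; revert a b; decide

lemma bool_h2 {a b c d : Bool} (h1 : a = c) (h2 : a ≠ b) (h3 : c ≠ d) : b = d := by
  revert h1 h2 h3; revert a b c d; decide

lemma bool_h3 {a b c d : Bool} (h1 : a = !c) (h2 : a ≠ b) (h3 : c ≠ d) : b = !d := by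
  revert h1 h2 h3; revert a b c d; decide

theorem stmt_12 {V : Type*} [Fintype V] (hV : 2 ≤ Fintype.card V)
    (R : Set (V → Bool))
    (hindec : ¬ ∃ P : Set V, P.Nonempty ∧ P ≠ Set.univ ∧ Decomp R P)
    (hbd : Blockwise R) :
    ∃ f g : V → Bool, f ≠ g ∧ R = {f, g} ∧ (∀ v, f v ≠ g v) ∧
      ∃ Eqs Nes : Set (V × V),
        R = {h | (∀ p ∈ Eqs, h p.1 = h p.2) ∧ (∀ p ∈ Nes, h p.1 ≠ h p.2)} := by
  obtain ⟨x, y, hxy⟩ := Fintype.exists_pair_of_one_lt_card (α := V) (by omega)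
  obtain ⟨f0, hf0, f1, hf1, hx, -, -⟩ := key hV R hindec hbd x y hxy
  have hdet : ∀ v, f0 v ≠ f1 v ∧
      ∀ f ∈ R, (f x = f0 x → f v = f0 v) ∧ (f x = f1 x → f v = f1 v) := by
    intro v
    by_cases hvx : v = x
    · subst hvx
      exact ⟨hx, fun f hf => ⟨fun h => h, fun h => h⟩⟩
    · obtain ⟨f0', hf0', f1', hf1', hx', hv', hprop'⟩ :=
        key hV R hindec hbd x v (fun he => hvx he.symm)
      rcases bool_eq_or (a := f0 x) hx' with h0 | h0
      · exact transfer hf0 hf1 hx hx' hv' hprop' h0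
      · exact transfer hf0 hf1 hx hx'.symm hv'.symm
          (fun f hf => ⟨(hprop' f hf).2, (hprop' f hf).1⟩) h0
  have hne : ∀ v, f0 v ≠ f1 v := fun v => (hdet v).1
  have hflip : ∀ v, f1 v = !(f0 v) := fun v => bool_flip (hne v)
  have hReq : R = {f0, f1} := by
    ext f
    constructor
    · intro hf
      rcases bool_eq_or (a := f x) hx with h | h
      · exact Or.inl (funext fun v => ((hdet v).2 f hf).1 h)
      · exact Or.inr (funext fun v => ((hdet v).2 f hf).2 h)
    · rintro (rfl | rfl) <;> assumption
  refine ⟨f0, f1, fun h => hx (congrFun h x), hReq, hne,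
    {p | f0 p.1 = f0 p.2}, {p | f0 p.1 ≠ f0 p.2}, ?_⟩
  rw [hReq]
  ext h
  constructor
  · rintro (rfl | rfl)
    · exact ⟨fun p hp => hp, fun p hp => hp⟩
    · constructor
      · intro p hp
        rw [hflip, hflip, hp]
      · intro p hp he
        rw [hflip, hflip] at he
        exact hp (by simpa using he)
  · rintro ⟨hE, hN⟩
    rcases bool_eq_or (a := h x) hx with h0 | h0
    · left
      funext v
      by_cases he : f0 x = f0 v
      · exact ((hE (x, v) he).symm.trans h0).trans he
      · exact bool_h2 h0 (hN (x, v) he) he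
    · right
      funext v
      by_cases he : f0 x = f0 v
      · have h1 : f1 x = f1 v := by rw [hflip, hflip, he]
        exact ((hE (x, v) he).symm.trans h0).trans h1
      · rw [hflip]
        exact bool_h3 (h0.trans (hflip x)) (hN (x, v) he) he
end

section
/- Suppose binary relations R₁, R₂ ⊆ D × D over finite domain D form an incompatible block structure: R₁ has blocks (A_x, A_z) and (B_x, B_z), R₂ has blocks (C_z, C_y) and (D_z, D_y), and the four intersections A_z∩C_z, A_z∩D_z, B_z∩C_z, B_z∩D_z are all nonempty. Then the ternary constraint R(x,y,z) defined by R₁(x,z) ∧ R₂(z,y) is not blockwise decomposable in the pair x,y. -/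
/-- `(A, B)` is a block of the binary relation `S ⊆ D × D`: the rows in `A` have
their nonempty entries exactly in the columns `B` and vice versa, and both sides
are nonempty. -/
def IsBlock {D : Type*} (S : Set (D × D)) (A B : Set D) : Prop :=
  A.Nonempty ∧ B.Nonempty ∧
  (∀ a ∈ A, ∀ b ∈ B, (a, b) ∈ S) ∧
  (∀ a ∈ A, ∀ b, (a, b) ∈ S → b ∈ B) ∧
  (∀ b ∈ B, ∀ a, (a, b) ∈ S → a ∈ A)

theorem stmt_15 {D : Type*} [Fintype D] (R₁ R₂ : Set (D × D))
    (Ax Az Bx Bz Cz Cy Dz Dy : Set D)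
    (hA : IsBlock R₁ Ax Az) (hB : IsBlock R₁ Bx Bz)
    (hC : IsBlock R₂ Cz Cy) (hD : IsBlock R₂ Dz Dy)
    (hABx : Disjoint Ax Bx) (hABz : Disjoint Az Bz)
    (hCDz : Disjoint Cz Dz) (hCDy : Disjoint Cy Dy)
    (h1 : (Az ∩ Cz).Nonempty) (h2 : (Az ∩ Dz).Nonempty)
    (h3 : (Bz ∩ Cz).Nonempty) (h4 : (Bz ∩ Dz).Nonempty) :
    ¬ BlockwiseIn {f : Fin 3 → D | (f 0, f 2) ∈ R₁ ∧ (f 2, f 1) ∈ R₂} 0 1 := by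
  classical
  rintro ⟨k, A, B, hAd, hBd, hSupp, hDec⟩
  obtain ⟨a, ha⟩ := hA.1
  obtain ⟨a', ha'⟩ := hB.1
  obtain ⟨b, hb⟩ := hC.2.1
  obtain ⟨b', hb'⟩ := hD.2.1
  obtain ⟨c1, hc1A, hc1C⟩ := h1
  obtain ⟨c2, hc2A, hc2D⟩ := h2
  obtain ⟨c3, hc3B, hc3C⟩ := h3
  obtain ⟨c4, hc4B, hc4D⟩ := h4
  set R : Set (Fin 3 → D) := {f : Fin 3 → D | (f 0, f 2) ∈ R₁ ∧ (f 2, f 1) ∈ R₂} with hR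
  have mem : ∀ u v w : D, (u, w) ∈ R₁ → (w, v) ∈ R₂ → (![u, v, w] : Fin 3 → D) ∈ R := by
    intro u v w h1 h2
    constructor <;> simpa
  have key : ∀ u v w : D, (u, w) ∈ R₁ → (w, v) ∈ R₂ → ∃ ℓ, u ∈ A ℓ ∧ v ∈ B ℓ := by
    intro u v w h1 h2
    exact (hSupp u v).mp ⟨![u, v, w], mem u v w h1 h2, rfl, rfl⟩
  obtain ⟨ℓ₁, hℓ₁a, hℓ₁b⟩ := key a b c1 (hA.2.2.1 a ha c1 hc1A) (hC.2.2.1 c1 hc1C b hb)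
  obtain ⟨ℓ₂, hℓ₂a, hℓ₂b'⟩ := key a b' c2 (hA.2.2.1 a ha c2 hc2A) (hD.2.2.1 c2 hc2D b' hb')
  obtain ⟨ℓ₃, hℓ₃a', hℓ₃b⟩ := key a' b c3 (hB.2.2.1 a' ha' c3 hc3B) (hC.2.2.1 c3 hc3C b hb)
  obtain ⟨ℓ₄, hℓ₄a', hℓ₄b'⟩ := key a' b' c4 (hB.2.2.1 a' ha' c4 hc4B) (hD.2.2.1 c4 hc4D b' hb')
  have e12 : ℓ₁ = ℓ₂ := by
    by_contra h
    exact (Set.disjoint_left.mp (hAd ℓ₁ ℓ₂ h) hℓ₁a) hℓ₂a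
  have e13 : ℓ₁ = ℓ₃ := by
    by_contra h
    exact (Set.disjoint_left.mp (hBd ℓ₁ ℓ₃ h) hℓ₁b) hℓ₃b
  have e34 : ℓ₃ = ℓ₄ := by
    by_contra h
    exact (Set.disjoint_left.mp (hAd ℓ₃ ℓ₄ h) hℓ₃a') hℓ₄a'
  subst e12; subst e13
  obtain ⟨P, h0P, h1P, hDecomp⟩ := hDec ℓ₁
  -- pick the appropriate pair of solutions depending on whether 2 ∈ P
  by_cases h2P : (2 : Fin 3) ∈ P
  · -- mix (a,b,c1) and (a',b',c4): get (a, b', c1) with c1 ∈ Cz, b' ∈ Dy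
    set f₁ : Fin 3 → D := ![a, b, c1] with hf₁def
    set f₂ : Fin 3 → D := ![a', b', c4] with hf₂def
    have hf₁ : f₁ ∈ {f ∈ R | f 0 ∈ A ℓ₁ ∧ f 1 ∈ B ℓ₁} :=
      ⟨mem a b c1 (hA.2.2.1 a ha c1 hc1A) (hC.2.2.1 c1 hc1C b hb), hℓ₁a, hℓ₁b⟩
    have hf₂ : f₂ ∈ {f ∈ R | f 0 ∈ A ℓ₁ ∧ f 1 ∈ B ℓ₁} := by
      refine ⟨mem a' b' c4 (hB.2.2.1 a' ha' c4 hc4B) (hD.2.2.1 c4 hc4D b' hb'), ?_, ?_⟩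
      · simpa [hf₂def] using e34 ▸ hℓ₄a'
      · simpa [hf₂def] using e34 ▸ hℓ₄b'
    set g : Fin 3 → D := fun v => if v ∈ P then f₁ v else f₂ v with hg
    have hgmem : g ∈ {f ∈ R | f 0 ∈ A ℓ₁ ∧ f 1 ∈ B ℓ₁} := by
      refine (hDecomp g).mpr ⟨⟨f₁, hf₁, fun v => ?_⟩, ⟨f₂, hf₂, fun v => ?_⟩⟩
      · simp [hg, v.2]
      · have : (v : Fin 3) ∉ P := v.2
        simp [hg, this]
    have hg0 : g 0 = a := by simp [hg, h0P, hf₁def]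
    have hg1 : g 1 = b' := by simp [hg, h1P, hf₂def]
    have hg2 : g 2 = c1 := by simp [hg, h2P, hf₁def]
    have hgR : g ∈ R := hgmem.1
    have : (c1, b') ∈ R₂ := by rw [← hg2, ← hg1]; exact hgR.2
    have : b' ∈ Cy := hC.2.2.2.1 c1 hc1C b' this
    exact (Set.disjoint_left.mp hCDy this) hb'
  · -- mix (a,b,c1) and (a',b,c3): get (a, b, c3) with a ∈ Ax, c3 ∈ Bz
    set f₁ : Fin 3 → D := ![a, b, c1] with hf₁def
    set f₂ : Fin 3 → D := ![a', b, c3] with hf₂def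
    have hf₁ : f₁ ∈ {f ∈ R | f 0 ∈ A ℓ₁ ∧ f 1 ∈ B ℓ₁} :=
      ⟨mem a b c1 (hA.2.2.1 a ha c1 hc1A) (hC.2.2.1 c1 hc1C b hb), hℓ₁a, hℓ₁b⟩
    have hf₂ : f₂ ∈ {f ∈ R | f 0 ∈ A ℓ₁ ∧ f 1 ∈ B ℓ₁} := by
      refine ⟨mem a' b c3 (hB.2.2.1 a' ha' c3 hc3B) (hC.2.2.1 c3 hc3C b hb), ?_, ?_⟩
      · simpa [hf₂def] using hℓ₃a'
      · simpa [hf₂def] using hℓ₁b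
    set g : Fin 3 → D := fun v => if v ∈ P then f₁ v else f₂ v with hg
    have hgmem : g ∈ {f ∈ R | f 0 ∈ A ℓ₁ ∧ f 1 ∈ B ℓ₁} := by
      refine (hDecomp g).mpr ⟨⟨f₁, hf₁, fun v => ?_⟩, ⟨f₂, hf₂, fun v => ?_⟩⟩
      · simp [hg, v.2]
      · have : (v : Fin 3) ∉ P := v.2
        simp [hg, this]
    have hg0 : g 0 = a := by simp [hg, h0P, hf₁def]
    have hg2 : g 2 = c3 := by simp [hg, h2P, hf₂def]
    have hgR : g ∈ R := hgmem.1
    have : (a, c3) ∈ R₁ := by rw [← hg0, ← hg2]; exact hgR.1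
    have : c3 ∈ Az := hA.2.2.2.1 a ha c3 this
    exact (Set.disjoint_left.mp hABz this) hc3B
end

section
/- If a constraint R(u⃗) over finite domain D decomposes, with respect to every variable x in a set C and every variable y outside C, as a product over some partition (V_{x,y}, W_{x,y}) with x ∈ V_{x,y}, y ∈ W_{x,y}, and moreover whenever V_{x,y} contains one variable of C it contains all of C, then R(u⃗) = π_C(R(u⃗)) × π_{ũ∖C}(R(u⃗)). -/
open Classical in
private noncomputable def mix {V D : Type*} (P : Set V) (g h : V → D) : V → D :=
  fun v => if v ∈ P then g v else h v

private lemma decomp_iff {V D : Type*} (R : Set (V → D)) (P : Set V) :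
    Decomp R P ↔ ∀ g ∈ R, ∀ h ∈ R, mix P g h ∈ R := by
  constructor
  · intro hd g hg h hh
    rw [hd]
    refine ⟨⟨g, hg, fun y => ?_⟩, ⟨h, hh, fun y => ?_⟩⟩
    · simp [mix, y.2]
    · have : (y : V) ∉ P := y.2
      simp [mix, this]
  · intro hm f
    constructor
    · intro hf; exact ⟨⟨f, hf, fun _ => rfl⟩, ⟨f, hf, fun _ => rfl⟩⟩
    · rintro ⟨⟨g, hg, hg'⟩, ⟨h, hh, hh'⟩⟩
      have : f = mix P g h := by
        funext v
        by_cases hv : v ∈ P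
        · simpa [mix, hv] using (hg' ⟨v, hv⟩).symm
        · simpa [mix, hv] using (hh' ⟨v, hv⟩).symm
      rw [this]; exact hm g hg h hh

private lemma decomp_inter {V D : Type*} {R : Set (V → D)} {P Q : Set V}
    (hP : Decomp R P) (hQ : Decomp R Q) : Decomp R (P ∩ Q) := by
  rw [decomp_iff] at *
  intro g hg h hh
  have e : mix (P ∩ Q) g h = mix P (mix Q g h) h := by
    funext v
    by_cases hv : v ∈ P <;> by_cases hv' : v ∈ Q <;> simp [mix, hv, hv']
  rw [e]
  exact hP _ (hQ g hg h hh) h hh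

private lemma decomp_univ {V D : Type*} (R : Set (V → D)) : Decomp R Set.univ := by
  rw [decomp_iff]
  intro g hg h hh
  have e : mix (Set.univ : Set V) g h = g := by funext v; simp [mix]
  rwa [e]

theorem stmt_19 {V D : Type*} [Fintype V] [Fintype D] (R : Set (V → D))
    (C : Set V) (hne : C.Nonempty) (hproper : C ≠ Set.univ)
    (h : ∀ x ∈ C, ∀ y ∈ Cᶜ, ∃ P : Set V,
      x ∈ P ∧ y ∉ P ∧ Decomp R P ∧ ((∃ c ∈ C, c ∈ P) → C ⊆ P)) :
    Decomp R C := by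
  classical
  obtain ⟨x, hx⟩ := hne
  have key : ∀ y : V, ∃ P : Set V, Decomp R P ∧ C ⊆ P ∧ (y ∉ C → y ∉ P) := by
    intro y
    by_cases hy : y ∈ C
    · exact ⟨Set.univ, decomp_univ R, Set.subset_univ _, fun hc => absurd hy hc⟩
    · obtain ⟨P, hxP, hyP, hdec, hsub⟩ := h x hx y hy
      exact ⟨P, hdec, hsub ⟨x, hx, hxP⟩, fun _ => hyP⟩
  choose P hdec hsub hnot using key
  have hC : C = ⋂ y, P y := by
    apply Set.eq_of_subset_of_subset
    · exact Set.subset_iInter fun y => hsub y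
    · intro v hv
      by_contra hvC
      exact hnot v hvC (Set.mem_iInter.mp hv v)
  rw [hC]
  have main : ∀ s : Finset V, Decomp R (⋂ y ∈ s, P y) := by
    intro s
    induction s using Finset.induction with
    | empty => simpa using decomp_univ R
    | insert _ _ hmem ih =>
        rw [Finset.set_biInter_insert]
        exact decomp_inter (hdec _) ih
  have := main Finset.univ
  simpa using this
end
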